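/- In the leaf-order setup for a connected generalized block graph G (with common intersection A, merged graph G', and G'' the induced subgraph of G on [n]∖A), set J_1 = 𝔍_{G'} and J_2 = (x_{kj} : 1 ≤ k ≤ m, j ∈ A) + 𝔍_{G''}. Then for the lexicographic order <, ini_<(J_1 + J_2) = ini_<(J_1) + ini_<(J_2) and ini_<(𝔍_G) = ini_<(J_1 ∩ J_2) = ini_<(J_1) ∩ ini_<(J_2). -/

import Mathlib

open scoped TensorProduct

namespace GBEI

/-! ### Graph-theoretic notions -/

/-- Number of connected components of a graph. -/
noncomputable def ncomp {V : Type} (G : SimpleGraph V) : ℕ :=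
  Nat.card G.ConnectedComponent

/-- Number of connected components of the induced subgraph on the complement of `T`. -/
noncomputable def ncompDel {V : Type} (G : SimpleGraph V) (T : Finset V) : ℕ :=
  Nat.card (G.induce ((↑T : Set V)ᶜ)).ConnectedComponent

/-- `T` is a cut set: deleting `T` increases the number of connected components. -/
def IsCutSet {V : Type} (G : SimpleGraph V) (T : Finset V) : Prop :=
  ncomp G < ncompDel G T

/-- `T` is a cut set which is minimal with respect to inclusion. -/
def IsMinimalCutSet {V : Type} (G : SimpleGraph V) (T : Finset V) : Prop :=
  IsCutSet G T ∧ ∀ T' ⊆ T, IsCutSet G T' → T' = T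

/-- `aCount G i` is the number of minimal cut sets of `G` of cardinality `i`. -/
noncomputable def aCount {V : Type} (G : SimpleGraph V) (i : ℕ) : ℕ :=
  Set.ncard {T : Finset V | IsMinimalCutSet G T ∧ T.card = i}

/-- `T` has the cut point property: for every `i ∈ T`,
`c(T \ {i}) < c(T)` where `c(T)` is the number of connected components of `G` restricted
to the complement of `T`. -/
def HasCutPointProperty {V : Type} [DecidableEq V] (G : SimpleGraph V) (T : Finset V) : Prop :=
  ∀ i ∈ T, ncompDel G (T.erase i) < ncompDel G T

/-- A graph is chordal if it has no induced cycle of length at least 4. -/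
def Chordal {V : Type} (G : SimpleGraph V) : Prop :=
  ∀ k : ℕ, 4 ≤ k → IsEmpty (SimpleGraph.cycleGraph k ↪g G)

/-- A maximal clique of `G`, as a finite set of vertices. -/
def IsMaxClique {V : Type} (G : SimpleGraph V) (s : Finset V) : Prop :=
  G.IsClique (↑s : Set V) ∧ ∀ t : Finset V, G.IsClique (↑t : Set V) → s ⊆ t → s = t

/-- A generalized block graph: a chordal graph in which, for any three (distinct) maximal
cliques with nonempty common intersection, the pairwise intersections all coincide. -/
def IsGeneralizedBlockGraph {V : Type} [DecidableEq V] (G : SimpleGraph V) : Prop :=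
  Chordal G ∧
    ∀ F₁ F₂ F₃ : Finset V, IsMaxClique G F₁ → IsMaxClique G F₂ → IsMaxClique G F₃ →
      F₁ ≠ F₂ → F₁ ≠ F₃ → F₂ ≠ F₃ → (F₁ ∩ F₂ ∩ F₃).Nonempty →
      F₁ ∩ F₂ = F₂ ∩ F₃ ∧ F₁ ∩ F₃ = F₂ ∩ F₃

/-- A block graph: a chordal graph in which any two distinct maximal cliques meet in at
most one vertex. -/
def IsBlockGraph {V : Type} [DecidableEq V] (G : SimpleGraph V) : Prop :=
  Chordal G ∧
    ∀ F₁ F₂ : Finset V, IsMaxClique G F₁ → IsMaxClique G F₂ → F₁ ≠ F₂ → (F₁ ∩ F₂).card ≤ 1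

/-- The complete graph on a finite set `B` of vertices (with all other vertices isolated). -/
def cliqueOn {V : Type} (B : Finset V) : SimpleGraph V where
  Adj u v := u ≠ v ∧ u ∈ B ∧ v ∈ B
  symm := ⟨fun u v ⟨h1, h2, h3⟩ => ⟨h1.symm, h3, h2⟩⟩
  loopless := ⟨fun u h => h.1 rfl⟩

/-- The graph obtained from `G` by deleting all vertices in `A` (keeping the ambient
vertex type; deleted vertices become isolated). Its edges are exactly the edges of the
induced subgraph of `G` on the complement of `A`. -/
def delVerts {V : Type} (G : SimpleGraph V) (A : Finset V) : SimpleGraph V where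
  Adj u v := G.Adj u v ∧ u ∉ A ∧ v ∉ A
  symm := ⟨fun u v ⟨h1, h2, h3⟩ => ⟨h1.symm, h3, h2⟩⟩
  loopless := ⟨fun u h => G.ne_of_adj h.1 rfl⟩

/-! ### The polynomial ring and generalized binomial edge ideals -/

/-- The polynomial ring `K[x_{kj} : 1 ≤ k ≤ m, 1 ≤ j ≤ n]`; the variable type carries the
lexicographic order in which `x_{11}` is the smallest index (hence the largest variable for
the induced lexicographic monomial order). -/
abbrev PolyS (K : Type) [Field K] (m n : ℕ) : Type := MvPolynomial (Fin m ×ₗ Fin n) K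

/-- The variable `x_{kj}`. -/
noncomputable def xv (K : Type) [Field K] {m n : ℕ} (k : Fin m) (j : Fin n) : PolyS K m n :=
  MvPolynomial.X (toLex (k, j))

/-- The 2-minor `[k,l|i,j] = x_{ki} x_{lj} - x_{li} x_{kj}`. -/
noncomputable def pminor (K : Type) [Field K] {m n : ℕ} (k l : Fin m) (i j : Fin n) :
    PolyS K m n :=
  xv K k i * xv K l j - xv K l i * xv K k j

/-- The generalized binomial edge ideal `𝔍_G` of a graph `G` on `[n]`. -/
noncomputable def gbei (K : Type) [Field K] (m : ℕ) {n : ℕ} (G : SimpleGraph (Fin n)) :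
    Ideal (PolyS K m n) :=
  Ideal.span {f | ∃ (k l : Fin m) (i j : Fin n),
    k < l ∧ i < j ∧ G.Adj i j ∧ f = pminor K k l i j}

/-- The ideal generated by the variables `x_{kj}`, `1 ≤ k ≤ m`, `j ∈ A`. -/
noncomputable def varsIdeal (K : Type) [Field K] (m : ℕ) {n : ℕ} (A : Finset (Fin n)) :
    Ideal (PolyS K m n) :=
  Ideal.span {f | ∃ (k : Fin m) (j : Fin n), j ∈ A ∧ f = xv K k j}

/-! ### Lexicographic initial ideals -/

/-- `d` is the exponent vector of the lexicographic leading monomial of `p`, for the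
lexicographic order with `x_{11} > ⋯ > x_{1n} > x_{21} > ⋯ > x_{mn}`. -/
def IsLeadExp (K : Type) [Field K] {m n : ℕ} (p : PolyS K m n)
    (d : (Fin m ×ₗ Fin n) →₀ ℕ) : Prop :=
  d ∈ p.support ∧ ∀ e ∈ p.support, e ≠ d → toLex e < toLex d

/-- The initial ideal of `I` with respect to the lexicographic order: the ideal generated
by the leading monomials of the nonzero elements of `I`. -/
noncomputable def iniIdeal (K : Type) [Field K] {m n : ℕ} (I : Ideal (PolyS K m n)) :
    Ideal (PolyS K m n) :=
  Ideal.span {f | ∃ p ∈ I, ∃ d, IsLeadExp K p d ∧ f = MvPolynomial.monomial d (1 : K)}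

/-! ### Projective dimension, depth and Castelnuovo–Mumford regularity -/

/-- `M` admits a resolution `0 → F_k → ⋯ → F_1 → F_0 → M → 0` by finitely generated
free `R`-modules. -/
def HasFreeResLen (R : Type) [CommRing R] (M : Type) [AddCommGroup M] [Module R M]
    (k : ℕ) : Prop :=
  ∃ (ι : ℕ → Type) (_ : ∀ i, Finite (ι i))
    (d : ∀ i : ℕ, (ι (i + 1) →₀ R) →ₗ[R] (ι i →₀ R)) (ε : (ι 0 →₀ R) →ₗ[R] M),
      (∀ i, k < i → IsEmpty (ι i)) ∧
      Function.Surjective ε ∧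
      Function.Exact (d 0) ε ∧
      ∀ i, Function.Exact (d (i + 1)) (d i)

/-- The projective dimension of `M`: the smallest possible length of a finite free
resolution of `M`. -/
noncomputable def projDim (R : Type) [CommRing R] (M : Type) [AddCommGroup M]
    [Module R M] : ℕ :=
  sInf {k | HasFreeResLen R M k}

/-- The depth of `S/I` (with respect to the irrelevant maximal ideal), via the
Auslander–Buchsbaum formula: `depth S/I = (number of variables) - projdim S/I`. -/
noncomputable def depthQuot {σ : Type} (K : Type) [Field K] (I : Ideal (MvPolynomial σ K)) :
    ℕ :=
  Nat.card σ - projDim (MvPolynomial σ K) (MvPolynomial σ K ⧸ I)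

/-- `S/I` admits a graded free resolution (by finitely generated graded free modules,
with generator degrees `degs`) in which all shifts `j` occurring in homological degree `i`
satisfy `j ≤ r + i`.  The minimum of all such `r` is the Castelnuovo–Mumford regularity
`max { j - i : β_{ij}(S/I) ≠ 0 }`. -/
def HasGradedFreeResRegLE {σ : Type} (K : Type) [Field K] (I : Ideal (MvPolynomial σ K))
    (r : ℕ) : Prop :=
  ∃ (len : ℕ) (ι : ℕ → Type) (_ : ∀ i, Finite (ι i)) (degs : ∀ i, ι i → ℕ)
    (d : ∀ i : ℕ, (ι (i + 1) →₀ MvPolynomial σ K) →ₗ[MvPolynomial σ K] (ι i →₀ MvPolynomial σ K))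
    (ε : (ι 0 →₀ MvPolynomial σ K) →ₗ[MvPolynomial σ K] (MvPolynomial σ K ⧸ I)),
      (∀ i, len < i → IsEmpty (ι i)) ∧
      Function.Surjective ε ∧
      Function.Exact (d 0) ε ∧
      (∀ i, Function.Exact (d (i + 1)) (d i)) ∧
      (∀ a : ι 0, ∃ p : MvPolynomial σ K,
        p.IsHomogeneous (degs 0 a) ∧ ε (Finsupp.single a 1) = Ideal.Quotient.mk I p) ∧
      (∀ (i : ℕ) (a : ι (i + 1)) (b : ι i),
        (d i (Finsupp.single a 1)) b = 0 ∨
        ∃ e, e + degs i b = degs (i + 1) a ∧ ((d i (Finsupp.single a 1)) b).IsHomogeneous e) ∧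
      (∀ (i : ℕ) (a : ι i), degs i a ≤ r + i)

/-- The Castelnuovo–Mumford regularity of `S/I`. -/
noncomputable def regQuot {σ : Type} (K : Type) [Field K] (I : Ideal (MvPolynomial σ K)) :
    ℕ :=
  sInf {r | HasGradedFreeResRegLE K I r}

/-- The height of a prime ideal `P` (junk value `0` if `P` is not prime). -/
noncomputable def primeHeight {R : Type} [CommRing R] (P : Ideal R) : ℕ∞ :=
  ⨆ h : P.IsPrime, Order.height (⟨P, h⟩ : PrimeSpectrum R)

/-- An ideal is unmixed if all of its minimal primes have the same height. -/
def IsUnmixed {R : Type} [CommRing R] (I : Ideal R) : Prop :=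
  ∀ P ∈ I.minimalPrimes, ∀ Q ∈ I.minimalPrimes, primeHeight P = primeHeight Q

end GBEI

namespace GBEI

/-- The generalized binomial edge ideal of (the restriction of) `G` inside the polynomial
ring `K[x_{kj} : 1 ≤ k ≤ m, j ∈ V]` on a subset `V` of the vertices. -/
noncomputable def gbeiOn (K : Type) [Field K] (m : ℕ) {n : ℕ} (G : SimpleGraph (Fin n))
    (V : Set (Fin n)) : Ideal (MvPolynomial (Fin m × V) K) :=
  Ideal.span {f | ∃ (k l : Fin m) (i j : V),
    k < l ∧ (i : Fin n) < (j : Fin n) ∧ G.Adj (i : Fin n) (j : Fin n) ∧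
    f = MvPolynomial.X (k, i) * MvPolynomial.X (l, j) -
        MvPolynomial.X (l, i) * MvPolynomial.X (k, j)}

/-- The degree-`dd` homogeneous component of `S/I`, the image of the space of homogeneous
polynomials of degree `dd`. -/
noncomputable def quotDeg {σ : Type} (K : Type) [Field K] (I : Ideal (MvPolynomial σ K))
    (dd : ℕ) : Submodule K (MvPolynomial σ K ⧸ I) :=
  Submodule.map (Ideal.Quotient.mkₐ K I).toLinearMap (MvPolynomial.homogeneousSubmodule σ K dd)

/-- The minimal prime `P_T(G)` of `𝔍_G` associated with a set `T` having the cut point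
property: it is generated by the variables `x_{kj}`, `j ∈ T`, together with the 2-minors
`[k,l|i,j]` for all pairs `i < j` of vertices lying in a common connected component of the
restriction of `G` to the complement of `T`. -/
noncomputable def cutPrime (K : Type) [Field K] (m : ℕ) {n : ℕ} (G : SimpleGraph (Fin n))
    (T : Finset (Fin n)) : Ideal (PolyS K m n) :=
  Ideal.span ({f | ∃ (k : Fin m) (j : Fin n), j ∈ T ∧ f = xv K k j} ∪
    {f | ∃ (k l : Fin m) (i j : Fin n) (hi : i ∈ ((↑T : Set (Fin n))ᶜ))
      (hj : j ∈ ((↑T : Set (Fin n))ᶜ)),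
      k < l ∧ i < j ∧ (G.induce ((↑T : Set (Fin n))ᶜ)).Reachable ⟨i, hi⟩ ⟨j, hj⟩ ∧
      f = pminor K k l i j})



/-! ### Auxiliary machinery for the proof of Statement 15 -/

section AuxMachinery
open MvPolynomial

variable {K : Type} [Field K] {m n : ℕ}

lemma lex_add_lt {τ : Type} [LinearOrder τ] (e : τ →₀ ℕ) {x y : τ →₀ ℕ}
    (h : toLex x < toLex y) : toLex (e + x) < toLex (e + y) := by
  obtain ⟨j, hj, hlt⟩ := h
  refine ⟨j, fun d hd => ?_, ?_⟩
  · have := hj d hd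
    simp only [ofLex_toLex] at this ⊢
    simp [Finsupp.add_apply, this]
  · have : x j < y j := hlt
    simp only [ofLex_toLex]
    simpa [Finsupp.add_apply] using Nat.add_lt_add_left this (e j)

lemma exists_isLeadExp (p : PolyS K m n) (hp : p ≠ 0) : ∃ d, IsLeadExp K p d := by
  have hs : p.support.Nonempty := MvPolynomial.support_nonempty.mpr hp
  obtain ⟨d, hd, hmax⟩ := p.support.exists_max_image toLex hs
  exact ⟨d, hd, fun e he hne => lt_of_le_of_ne (hmax e he)
    (fun h => hne (toLex.injective h))⟩

lemma isLeadExp_monomial_mul {p : PolyS K m n} {d} (h : IsLeadExp K p d)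
    (e : (Fin m ×ₗ Fin n) →₀ ℕ) :
    IsLeadExp K (MvPolynomial.monomial e (1 : K) * p) (e + d) := by
  obtain ⟨hd, hlt⟩ := h
  constructor
  · rw [MvPolynomial.mem_support_iff, MvPolynomial.coeff_monomial_mul, one_mul]
    exact MvPolynomial.mem_support_iff.mp hd
  · intro w hw hne
    rw [MvPolynomial.mem_support_iff, MvPolynomial.coeff_monomial_mul'] at hw
    by_cases hle : e ≤ w
    · rw [if_pos hle, one_mul] at hw
      have hwe : w - e ∈ p.support := MvPolynomial.mem_support_iff.mpr hw
      have hweq : e + (w - e) = w := by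
        rw [add_comm]; exact tsub_add_cancel_of_le hle
      have hne' : w - e ≠ d := by
        intro hh; exact hne (by rw [← hweq, hh])
      have := lex_add_lt e (hlt _ hwe hne')
      rwa [hweq] at this
    · rw [if_neg hle] at hw; exact absurd rfl hw

lemma iniIdeal_mono {I J : Ideal (PolyS K m n)} (h : I ≤ J) :
    iniIdeal K I ≤ iniIdeal K J := by
  apply Ideal.span_mono
  rintro f ⟨p, hp, d, hd, rfl⟩
  exact ⟨p, h hp, d, hd, rfl⟩

lemma monomial_lead_mem_iniIdeal {I : Ideal (PolyS K m n)} {p : PolyS K m n} {d}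
    (hp : p ∈ I) (hd : IsLeadExp K p d) :
    MvPolynomial.monomial d (1 : K) ∈ iniIdeal K I :=
  Ideal.subset_span ⟨p, hp, d, hd, rfl⟩

/-- degree piece of an ideal, as K-submodule -/
noncomputable def dpiece (I : Ideal (PolyS K m n)) (dd : ℕ) :
    Submodule K (PolyS K m n) :=
  (Submodule.restrictScalars K I) ⊓ (homogeneousSubmodule (Fin m ×ₗ Fin n) K dd)

def CompStable (I : Ideal (PolyS K m n)) : Prop :=
  ∀ p ∈ I, ∀ d, homogeneousComponent d p ∈ I

lemma compStable_span (S : Set (PolyS K m n))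
    (hS : ∀ g ∈ S, ∃ e, g.IsHomogeneous e) : CompStable (Ideal.span S) := by
  intro p hp
  classical
  refine Submodule.span_induction ?_ ?_ ?_ ?_ hp
  · rintro g hg d
    obtain ⟨e, he⟩ := hS g hg
    rw [homogeneousComponent_of_mem ((mem_homogeneousSubmodule _ _).mpr he)]
    split
    · exact Ideal.subset_span hg
    · exact (Ideal.span S).zero_mem
  · intro d; rw [map_zero]; exact (Ideal.span S).zero_mem
  · intro a b _ _ ha hb d
    rw [map_add]; exact (Ideal.span S).add_mem (ha d) (hb d)
  · intro c p hp hcomp d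
    have hc : c = ∑ i ∈ Finset.range (c.totalDegree + 1), homogeneousComponent i c :=
      (sum_homogeneousComponent c).symm
    have hpd : p = ∑ j ∈ Finset.range (p.totalDegree + 1), homogeneousComponent j p :=
      (sum_homogeneousComponent p).symm
    have : c • p = ∑ i ∈ Finset.range (c.totalDegree + 1),
        ∑ j ∈ Finset.range (p.totalDegree + 1),
          homogeneousComponent i c * homogeneousComponent j p := by
      rw [smul_eq_mul]; conv_lhs => rw [hc, hpd]
      rw [Finset.sum_mul_sum]
    rw [this, map_sum]
    refine Submodule.sum_mem _ fun i _ => ?_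
    rw [map_sum]
    refine Submodule.sum_mem _ fun j _ => ?_
    have hhom : (homogeneousComponent i c * homogeneousComponent j p).IsHomogeneous (i + j) :=
      (homogeneousComponent_isHomogeneous i c).mul (homogeneousComponent_isHomogeneous j p)
    rw [homogeneousComponent_of_mem ((mem_homogeneousSubmodule _ _).mpr hhom)]
    split
    · exact Ideal.mul_mem_left _ _ (hcomp j)
    · exact (Ideal.span S).zero_mem

lemma CompStable.inf {I J : Ideal (PolyS K m n)} (hI : CompStable I)
    (hJ : CompStable J) : CompStable (I ⊓ J) :=
  fun p hp d => ⟨hI p hp.1 d, hJ p hp.2 d⟩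

lemma CompStable.sup {I J : Ideal (PolyS K m n)} (hI : CompStable I)
    (hJ : CompStable J) : CompStable (I ⊔ J) := by
  intro p hp d
  obtain ⟨a, ha, b, hb, rfl⟩ := Submodule.mem_sup.mp hp
  rw [map_add]
  exact Submodule.add_mem _ (Submodule.mem_sup_left (hI a ha d))
    (Submodule.mem_sup_right (hJ b hb d))

lemma dpiece_inf (I J : Ideal (PolyS K m n)) (dd : ℕ) :
    dpiece (I ⊓ J) dd = dpiece I dd ⊓ dpiece J dd := by
  ext p; simp [dpiece]; tauto

lemma dpiece_mono {I J : Ideal (PolyS K m n)} (h : I ≤ J) (dd : ℕ) :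
    dpiece I dd ≤ dpiece J dd :=
  inf_le_inf_right _ (fun p hp => h hp)

lemma dpiece_sup {I J : Ideal (PolyS K m n)} (hI : CompStable I)
    (hJ : CompStable J) (dd : ℕ) :
    dpiece (I ⊔ J) dd = dpiece I dd ⊔ dpiece J dd := by
  refine le_antisymm ?_ ?_
  · rintro p ⟨hp, hph⟩
    obtain ⟨a, ha, b, hb, rfl⟩ := Submodule.mem_sup.mp hp
    have hcomp : homogeneousComponent dd (a + b) = a + b := by
      rw [homogeneousComponent_of_mem hph, if_pos rfl]
    rw [map_add] at hcomp
    rw [← hcomp]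
    exact Submodule.add_mem _
      (Submodule.mem_sup_left ⟨hI a ha dd, homogeneousComponent_mem dd a⟩)
      (Submodule.mem_sup_right ⟨hJ b hb dd, homogeneousComponent_mem dd b⟩)
  · refine sup_le (le_inf ?_ inf_le_right) (le_inf ?_ inf_le_right)
    · exact le_trans inf_le_left (fun p hp => Submodule.mem_sup_left hp)
    · exact le_trans inf_le_left (fun p hp => Submodule.mem_sup_right hp)

lemma eq_of_dpieces_le {P Q : Ideal (PolyS K m n)} (hPQ : P ≤ Q) (hQ : CompStable Q)
    (h : ∀ d, dpiece Q d ≤ Submodule.restrictScalars K P) : P = Q := by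
  refine le_antisymm hPQ fun f hf => ?_
  have : f = ∑ i ∈ Finset.range (f.totalDegree + 1), homogeneousComponent i f :=
    (sum_homogeneousComponent f).symm
  rw [this]
  refine Submodule.sum_mem _ fun i _ => ?_
  exact h i ⟨hQ f hf i, homogeneousComponent_mem i f⟩

/-- support of an element of a monomial ideal -/
lemma support_mem_span_monomials {U : Set ((Fin m ×ₗ Fin n) →₀ ℕ)} {p : PolyS K m n}
    (hp : p ∈ Ideal.span ((fun u => (MvPolynomial.monomial u (1 : K))) '' U)) :
    ∀ w ∈ p.support, ∃ u ∈ U, u ≤ w := by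
  classical
  refine Submodule.span_induction ?_ ?_ ?_ ?_ hp
  · rintro g ⟨u, hu, rfl⟩ w hw
    rw [MvPolynomial.support_monomial, if_neg (one_ne_zero)] at hw
    simp only [Finset.mem_singleton] at hw
    exact ⟨u, hu, le_of_eq hw.symm⟩
  · intro w hw; simp at hw
  · intro a b _ _ ha hb w hw
    rcases Finset.mem_union.mp (MvPolynomial.support_add hw) with h | h
    exacts [ha w h, hb w h]
  · intro c q _ hq w hw
    have := MvPolynomial.support_mul c q hw
    rw [Finset.mem_add] at this
    obtain ⟨w1, h1, w2, h2, rfl⟩ := this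
    obtain ⟨u, hu, hle⟩ := hq w2 h2
    exact ⟨u, hu, le_trans hle (by
      intro s; simp [Finsupp.add_apply])⟩
/-- degree of exponents in support of homogeneous polys -/
lemma degree_of_mem_support {τ : Type} {p : MvPolynomial τ K} {dd : ℕ}
    (hp : p.IsHomogeneous dd) {w : τ →₀ ℕ} (hw : w ∈ p.support) :
    Finsupp.degree w = dd := by
  have h := hp (MvPolynomial.mem_support_iff.mp hw)
  rw [Finsupp.degree_eq_weight_one]
  exact h

lemma degree_add' {τ : Type} (a b : τ →₀ ℕ) :
    Finsupp.degree (a + b) = Finsupp.degree a + Finsupp.degree b := by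
  simp only [Finsupp.degree_eq_weight_one]
  exact map_add _ a b

/-- the degree-dd part of the polynomial ring is finite dimensional -/
lemma finiteDimensional_hd (dd : ℕ) :
    FiniteDimensional K ↥(homogeneousSubmodule (Fin m ×ₗ Fin n) K dd) := by
  classical
  have hE : {w : (Fin m ×ₗ Fin n) →₀ ℕ | Finsupp.degree w ≤ dd}.Finite :=
    Finsupp.finite_of_degree_le dd
  haveI : Fintype ↥{w : (Fin m ×ₗ Fin n) →₀ ℕ | Finsupp.degree w ≤ dd} := hE.fintype
  set E := {w : (Fin m ×ₗ Fin n) →₀ ℕ | Finsupp.degree w ≤ dd}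
  let Φ : ↥(homogeneousSubmodule (Fin m ×ₗ Fin n) K dd) →ₗ[K] (↥E → K) :=
    LinearMap.pi fun w => (MvPolynomial.lcoeff K w.val).comp
      (Submodule.subtype _)
  have hinj : Function.Injective Φ := by
    intro p q h
    ext w
    by_cases hw : Finsupp.degree w = dd
    · have := congrFun h ⟨w, le_of_eq hw⟩
      simpa [Φ, MvPolynomial.lcoeff] using this
    · have h1 : MvPolynomial.coeff w p.val = 0 := by
        by_contra hc
        exact hw (degree_of_mem_support p.2 (MvPolynomial.mem_support_iff.mpr hc))
      have h2 : MvPolynomial.coeff w q.val = 0 := by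
        by_contra hc
        exact hw (degree_of_mem_support q.2 (MvPolynomial.mem_support_iff.mpr hc))
      simpa [MvPolynomial.coeff] using h1.trans h2.symm
  exact FiniteDimensional.of_injective Φ hinj




def leadSet (W : Submodule K (PolyS K m n)) : Set ((Fin m ×ₗ Fin n) →₀ ℕ) :=
  {w | ∃ p, p ∈ W ∧ p ≠ 0 ∧ IsLeadExp K p w}

lemma finrank_eq_card_leadSet {W : Submodule K (PolyS K m n)} {dd : ℕ}
    (hW : W ≤ homogeneousSubmodule (Fin m ×ₗ Fin n) K dd) :
    Module.finrank K ↥W = Nat.card ↥(leadSet W) := by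
  classical
  haveI : FiniteDimensional K ↥(homogeneousSubmodule (Fin m ×ₗ Fin n) K dd) :=
    finiteDimensional_hd dd
  haveI hWfd : FiniteDimensional K ↥W := Submodule.finiteDimensional_of_le hW
  have hLfin : (leadSet W).Finite := by
    apply (Finsupp.finite_of_degree_le dd).subset
    rintro w ⟨p, hpW, hp0, hlead⟩
    exact le_of_eq (degree_of_mem_support (hW hpW) hlead.1)
  haveI : Fintype ↥(leadSet W) := hLfin.fintype
  -- upper bound
  have hub : Module.finrank K ↥W ≤ Nat.card ↥(leadSet W) := by
    let Φ : ↥W →ₗ[K] (↥(leadSet W) → K) :=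
      LinearMap.pi fun w => (MvPolynomial.lcoeff K w.val).comp (Submodule.subtype _)
    have hinj : Function.Injective Φ := by
      intro p q h
      by_contra hne
      have hpq : (p : PolyS K m n) - (q : PolyS K m n) ≠ 0 :=
        sub_ne_zero.mpr (fun hz => hne (Subtype.ext hz))
      obtain ⟨d, hd⟩ := exists_isLeadExp _ hpq
      have hdL : d ∈ leadSet W := ⟨(p : PolyS K m n) - (q : PolyS K m n),
        Submodule.sub_mem _ p.2 q.2, hpq, hd⟩
      have := congrFun h ⟨d, hdL⟩
      simp only [Φ, LinearMap.pi_apply, LinearMap.comp_apply, Submodule.subtype_apply,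
        MvPolynomial.lcoeff_apply] at this
      have hco : MvPolynomial.coeff d ((p : PolyS K m n) - (q : PolyS K m n)) ≠ 0 :=
        MvPolynomial.mem_support_iff.mp hd.1
      rw [MvPolynomial.coeff_sub, this, sub_self] at hco
      exact hco rfl
    calc Module.finrank K ↥W ≤ Module.finrank K (↥(leadSet W) → K) :=
          LinearMap.finrank_le_finrank_of_injective hinj
    _ = Fintype.card ↥(leadSet W) := Module.finrank_fintype_fun_eq_card K
    _ = Nat.card ↥(leadSet W) := (Nat.card_eq_fintype_card).symm
  -- lower bound
  have hlb : Nat.card ↥(leadSet W) ≤ Module.finrank K ↥W := by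
    have hchoice : ∀ w : ↥(leadSet W), ∃ p : PolyS K m n,
        p ∈ W ∧ p ≠ 0 ∧ IsLeadExp K p w.val := fun w => w.2
    choose pf hpfW hpf0 hpflead using hchoice
    have hindepR : LinearIndependent K (fun w : ↥(leadSet W) => pf w) := by
      rw [Fintype.linearIndependent_iff]
      intro g hg
      by_contra hne
      push_neg at hne
      obtain ⟨i₀, hi₀⟩ := hne
      set s : Finset ↥(leadSet W) := Finset.univ.filter (fun i => g i ≠ 0) with hs
      have hsne : s.Nonempty := ⟨i₀, by simp [hs, hi₀]⟩
      obtain ⟨wm, hwm, hmax⟩ := s.exists_max_image (fun w => toLex w.val) hsne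
      have hgwm : g wm ≠ 0 := by simpa [hs] using hwm
      have hcoeff : MvPolynomial.coeff wm.val (∑ i, g i • pf i) = 0 := by
        rw [hg]; simp
      rw [MvPolynomial.coeff_sum] at hcoeff
      have hterm : ∀ i ∈ Finset.univ, i ≠ wm →
          MvPolynomial.coeff wm.val (g i • pf i) = 0 := by
        intro i _ hine
        by_cases hgi : g i = 0
        · simp [hgi]
        · have his : i ∈ s := by simp [hs, hgi]
          have hle : toLex i.val ≤ toLex wm.val := hmax i his
          have hlt : toLex wm.val > toLex i.val := by
            refine lt_of_le_of_ne hle ?_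
            intro hh
            exact hine (Subtype.ext (toLex.injective hh))
          have hnotin : wm.val ∉ (pf i).support := by
            intro hin
            rcases eq_or_ne wm.val (i.val) with he | he
            · exact absurd (by rw [he]) (ne_of_gt hlt)
            · exact absurd ((hpflead i).2 _ hin he) (not_lt_of_gt hlt)
          rw [MvPolynomial.coeff_smul, MvPolynomial.notMem_support_iff.mp hnotin,
            smul_zero]
      rw [Finset.sum_eq_single_of_mem wm (Finset.mem_univ wm) hterm] at hcoeff
      rw [MvPolynomial.coeff_smul, smul_eq_mul] at hcoeff
      rcases mul_eq_zero.mp hcoeff with h | h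
      · exact hgwm h
      · exact MvPolynomial.mem_support_iff.mp (hpflead wm).1 h
    have hindepW : LinearIndependent K
        (fun w : ↥(leadSet W) => (⟨pf w, hpfW w⟩ : ↥W)) := by
      apply LinearIndependent.of_comp (Submodule.subtype W)
      exact hindepR
    calc Nat.card ↥(leadSet W) = Fintype.card ↥(leadSet W) := Nat.card_eq_fintype_card
    _ ≤ Module.finrank K ↥W := hindepW.fintype_card_le_finrank
  omega

-- NEW PART
def leadTerms (I : Ideal (PolyS K m n)) : Set ((Fin m ×ₗ Fin n) →₀ ℕ) :=
  {u | ∃ p ∈ I, IsLeadExp K p u}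

lemma iniIdeal_eq_span_monomials (I : Ideal (PolyS K m n)) :
    iniIdeal K I = Ideal.span ((fun u => (MvPolynomial.monomial u (1 : K))) '' leadTerms I) := by
  unfold iniIdeal
  congr 1
  ext f
  constructor
  · rintro ⟨p, hp, d, hd, rfl⟩
    exact ⟨d, ⟨p, hp, hd⟩, rfl⟩
  · rintro ⟨d, ⟨p, hp, hd⟩, rfl⟩
    exact ⟨p, hp, d, hd, rfl⟩

lemma compStable_iniIdeal (I : Ideal (PolyS K m n)) : CompStable (iniIdeal K I) := by
  rw [iniIdeal_eq_span_monomials]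
  apply compStable_span
  rintro g ⟨u, _, rfl⟩
  exact ⟨Finsupp.degree u, isHomogeneous_monomial _ rfl⟩

lemma ne_zero_of_isLeadExp {p : PolyS K m n} {d} (h : IsLeadExp K p d) : p ≠ 0 := by
  intro hz
  rw [hz] at h
  simpa using h.1

lemma leadSet_dpiece_ini {I : Ideal (PolyS K m n)} (hI : CompStable I) (dd : ℕ) :
    leadSet (dpiece (iniIdeal K I) dd) = leadSet (dpiece I dd) := by
  ext w
  constructor
  · rintro ⟨q, ⟨hqI, hqH⟩, hq0, hlead⟩
    have hw : w ∈ q.support := hlead.1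
    have hqI' : q ∈ Ideal.span ((fun u => (MvPolynomial.monomial u (1 : K))) '' leadTerms I) := by
      rwa [← iniIdeal_eq_span_monomials]
    obtain ⟨u, ⟨p, hpI, hpu⟩, hle⟩ := support_mem_span_monomials hqI' w hw
    set e := Finsupp.degree u with he
    set p' := homogeneousComponent e p with hp'
    have hp'I : p' ∈ I := hI p hpI e
    have hup' : MvPolynomial.coeff u p' = MvPolynomial.coeff u p := by
      rw [hp', coeff_homogeneousComponent, if_pos rfl]
    have hu_supp : u ∈ p'.support := by
      rw [MvPolynomial.mem_support_iff, hup']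
      exact MvPolynomial.mem_support_iff.mp hpu.1
    have hsub : p'.support ⊆ p.support := by
      intro e' he'
      rw [MvPolynomial.mem_support_iff, hp', coeff_homogeneousComponent] at he'
      rw [MvPolynomial.mem_support_iff]
      by_cases hdeg : Finsupp.degree e' = e
      · rwa [if_pos hdeg] at he'
      · rw [if_neg hdeg] at he'; exact absurd rfl he'
    have hlead' : IsLeadExp K p' u := ⟨hu_supp, fun e' he' hne => hpu.2 e' (hsub he') hne⟩
    set r := MvPolynomial.monomial (w - u) (1 : K) * p' with hr
    have hrI : r ∈ I := Ideal.mul_mem_left _ _ hp'I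
    have hwu : (w - u) + u = w := tsub_add_cancel_of_le hle
    have hrlead : IsLeadExp K r w := by
      have := isLeadExp_monomial_mul hlead' (w - u)
      rwa [hwu] at this
    have hr0 : r ≠ 0 := ne_zero_of_isLeadExp hrlead
    have hwdd : Finsupp.degree w = dd := degree_of_mem_support hqH hw
    have hrhom : r.IsHomogeneous dd := by
      have h1 : (MvPolynomial.monomial (w - u) (1 : K)).IsHomogeneous (Finsupp.degree (w - u)) :=
        isHomogeneous_monomial _ rfl
      have h2 : p'.IsHomogeneous e := homogeneousComponent_isHomogeneous e p
      have h3 : r.IsHomogeneous (Finsupp.degree (w - u) + e) := h1.mul h2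
      have h5 : Finsupp.degree (w - u) + Finsupp.degree u = Finsupp.degree w := by
        rw [← degree_add', hwu]
      have h4 : Finsupp.degree (w - u) + e = dd := by rw [he, h5, hwdd]
      rwa [h4] at h3
    exact ⟨r, ⟨hrI, hrhom⟩, hr0, hrlead⟩
  · rintro ⟨p, ⟨hpI, hpH⟩, hp0, hlead⟩
    refine ⟨MvPolynomial.monomial w (1 : K), ⟨monomial_lead_mem_iniIdeal hpI hlead, ?_⟩, ?_, ?_⟩
    · exact isHomogeneous_monomial _ (degree_of_mem_support hpH hlead.1)
    · rw [Ne, MvPolynomial.monomial_eq_zero]; exact one_ne_zero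
    · constructor
      · rw [MvPolynomial.mem_support_iff, MvPolynomial.coeff_monomial, if_pos rfl]
        exact one_ne_zero
      · intro e he hne
        rw [MvPolynomial.mem_support_iff, MvPolynomial.coeff_monomial] at he
        rcases eq_or_ne e w with h | h
        · exact absurd h hne
        · rw [if_neg (fun hh => h hh.symm)] at he; exact absurd rfl he

lemma dpiece_le_hd (I : Ideal (PolyS K m n)) (dd : ℕ) :
    dpiece I dd ≤ homogeneousSubmodule (Fin m ×ₗ Fin n) K dd := inf_le_right

lemma finrank_dpiece_ini {I : Ideal (PolyS K m n)} (hI : CompStable I) (dd : ℕ) :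
    Module.finrank K ↥(dpiece (iniIdeal K I) dd) = Module.finrank K ↥(dpiece I dd) := by
  rw [finrank_eq_card_leadSet (dpiece_le_hd _ dd), finrank_eq_card_leadSet (dpiece_le_hd _ dd),
    leadSet_dpiece_ini hI dd]

theorem iniIdeal_inf_of_sup_eq {I J : Ideal (PolyS K m n)} (hI : CompStable I)
    (hJ : CompStable J)
    (hsupeq : iniIdeal K (I ⊔ J) = iniIdeal K I ⊔ iniIdeal K J) :
    iniIdeal K (I ⊓ J) = iniIdeal K I ⊓ iniIdeal K J := by
  have hM1 : CompStable (iniIdeal K I) := compStable_iniIdeal I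
  have hM2 : CompStable (iniIdeal K J) := compStable_iniIdeal J
  have hinf : iniIdeal K (I ⊓ J) ≤ iniIdeal K I ⊓ iniIdeal K J :=
    le_inf (iniIdeal_mono inf_le_left) (iniIdeal_mono inf_le_right)
  haveI hfd : ∀ (P : Ideal (PolyS K m n)) (d : ℕ), FiniteDimensional K ↥(dpiece P d) := by
    intro P d
    haveI := finiteDimensional_hd (K := K) (m := m) (n := n) d
    exact Submodule.finiteDimensional_of_le (dpiece_le_hd P d)
  have hdim : ∀ d : ℕ,
      Module.finrank K ↥(dpiece (iniIdeal K (I ⊓ J)) d) =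
        Module.finrank K ↥(dpiece (iniIdeal K I ⊓ iniIdeal K J) d) := by
    intro d
    have e1 : Module.finrank K ↥(dpiece (iniIdeal K I ⊔ iniIdeal K J) d) +
        Module.finrank K ↥(dpiece (iniIdeal K I ⊓ iniIdeal K J) d)
        = Module.finrank K ↥(dpiece (iniIdeal K I) d) +
          Module.finrank K ↥(dpiece (iniIdeal K J) d) := by
      rw [dpiece_sup hM1 hM2, dpiece_inf]
      exact Submodule.finrank_sup_add_finrank_inf_eq _ _
    have e2 : Module.finrank K ↥(dpiece (I ⊔ J) d) + Module.finrank K ↥(dpiece (I ⊓ J) d)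
        = Module.finrank K ↥(dpiece I d) + Module.finrank K ↥(dpiece J d) := by
      rw [dpiece_sup hI hJ, dpiece_inf]
      exact Submodule.finrank_sup_add_finrank_inf_eq _ _
    have e3 := finrank_dpiece_ini hI d
    have e4 := finrank_dpiece_ini hJ d
    have e5 := finrank_dpiece_ini (hI.inf hJ) d
    have e6 := finrank_dpiece_ini (hI.sup hJ) d
    have e7 : Module.finrank K ↥(dpiece (iniIdeal K (I ⊔ J)) d) =
        Module.finrank K ↥(dpiece (iniIdeal K I ⊔ iniIdeal K J) d) := by rw [hsupeq]
    have i1 : Module.finrank K ↥(dpiece (iniIdeal K (I ⊓ J)) d) ≤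
        Module.finrank K ↥(dpiece (iniIdeal K I ⊓ iniIdeal K J) d) :=
      Submodule.finrank_mono (dpiece_mono hinf d)
    omega
  refine eq_of_dpieces_le hinf (hM1.inf hM2) ?_
  intro d
  have hdeq : dpiece (iniIdeal K I ⊓ iniIdeal K J) d = dpiece (iniIdeal K (I ⊓ J)) d :=
    (Submodule.eq_of_le_of_finrank_eq (dpiece_mono hinf d) (hdim d)).symm
  rw [hdeq]
  exact inf_le_left

/-- an exponent avoiding the columns in `A` -/
def AFree (A : Finset (Fin n)) (w : (Fin m ×ₗ Fin n) →₀ ℕ) : Prop :=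
  ∀ v : Fin m ×ₗ Fin n, (ofLex v).2 ∈ A → w v = 0

noncomputable instance {A : Finset (Fin n)} {w : (Fin m ×ₗ Fin n) →₀ ℕ} :
    Decidable (AFree (m := m) A w) := Classical.propDecidable _

/-- substitution killing the variables with column in `A` -/
noncomputable def killA (A : Finset (Fin n)) : PolyS K m n →ₐ[K] PolyS K m n :=
  MvPolynomial.aeval (fun v : Fin m ×ₗ Fin n =>
    if (ofLex v).2 ∈ A then (0 : PolyS K m n) else MvPolynomial.X v)

lemma killA_X (A : Finset (Fin n)) (v : Fin m ×ₗ Fin n) :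
    killA (K := K) (m := m) A (MvPolynomial.X v) =
      if (ofLex v).2 ∈ A then 0 else MvPolynomial.X v := by
  simp [killA]

lemma killA_monomial (A : Finset (Fin n)) (w : (Fin m ×ₗ Fin n) →₀ ℕ) (c : K) :
    killA (m := m) A (MvPolynomial.monomial w c) =
      if AFree A w then MvPolynomial.monomial w c else 0 := by
  classical
  rw [killA, MvPolynomial.aeval_monomial]
  by_cases h : AFree A w
  · rw [if_pos h]
    have hprod : (w.prod fun i k =>
        (if (ofLex i).2 ∈ A then (0 : PolyS K m n) else MvPolynomial.X i) ^ k) =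
        w.prod fun i k => (MvPolynomial.X i) ^ k := by
      apply Finsupp.prod_congr
      intro v hv
      have : (ofLex v).2 ∉ A := by
        intro hA
        exact (Finsupp.mem_support_iff.mp hv) (h v hA)
      rw [if_neg this]
    rw [hprod]
    rw [MvPolynomial.monomial_eq, MvPolynomial.algebraMap_eq]
  · rw [if_neg h]
    simp only [AFree, not_forall] at h
    obtain ⟨v, hvA, hv0⟩ := h
    have hvmem : v ∈ w.support := Finsupp.mem_support_iff.mpr hv0
    have hzero : (w.prod fun i k =>
        (if (ofLex i).2 ∈ A then (0 : PolyS K m n) else MvPolynomial.X i) ^ k) = 0 := by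
      apply Finset.prod_eq_zero hvmem
      simp only [if_pos hvA]
      exact zero_pow hv0
    rw [hzero, mul_zero]

lemma killA_coeff (A : Finset (Fin n)) (q : PolyS K m n) (w : (Fin m ×ₗ Fin n) →₀ ℕ) :
    MvPolynomial.coeff w (killA (m := m) A q) =
      if AFree A w then MvPolynomial.coeff w q else 0 := by
  classical
  induction q using MvPolynomial.induction_on' with
  | monomial u a =>
    rw [killA_monomial]
    by_cases hu : AFree A u
    · rw [if_pos hu]
      by_cases hw : AFree A w
      · rw [if_pos hw]
      · rw [if_neg hw, MvPolynomial.coeff_monomial]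
        have : u ≠ w := fun h => hw (h ▸ hu)
        rw [if_neg this]
    · rw [if_neg hu, MvPolynomial.coeff_zero]
      by_cases hw : AFree A w
      · rw [if_pos hw, MvPolynomial.coeff_monomial]
        have : u ≠ w := fun h => hu (h ▸ hw)
        rw [if_neg this]
      · rw [if_neg hw]
  | add p q hp hq =>
    rw [map_add, MvPolynomial.coeff_add, hp, hq]
    split <;> simp [MvPolynomial.coeff_add]

lemma killA_fixes {A : Finset (Fin n)} {g : PolyS K m n}
    (hg : ∀ w ∈ g.support, AFree A w) : killA (m := m) A g = g := by
  ext w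
  rw [killA_coeff]
  by_cases hw : AFree A w
  · rw [if_pos hw]
  · rw [if_neg hw]
    by_contra hc
    exact hw (hg w (MvPolynomial.mem_support_iff.mpr fun h => hc h.symm))

lemma killA_support_subset (A : Finset (Fin n)) (q : PolyS K m n) :
    (killA (m := m) A q).support ⊆ q.support := by
  intro w hw
  rw [MvPolynomial.mem_support_iff, killA_coeff] at hw
  rw [MvPolynomial.mem_support_iff]
  by_cases h : AFree A w
  · rwa [if_pos h] at hw
  · rw [if_neg h] at hw; exact absurd rfl hw

lemma killA_varsIdeal_eq_zero {A : Finset (Fin n)} {p : PolyS K m n}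
    (hp : p ∈ varsIdeal K m A) : killA (m := m) A p = 0 := by
  have hmap : killA (m := m) A p ∈
      Ideal.map (killA (K := K) (m := m) A).toRingHom (varsIdeal K m A) :=
    Ideal.mem_map_of_mem _ hp
  have hle : Ideal.map (killA (K := K) (m := m) A).toRingHom (varsIdeal K m A) ≤ ⊥ := by
    rw [varsIdeal, Ideal.map_span, Ideal.span_le]
    rintro f ⟨g, ⟨k, j, hj, rfl⟩, rfl⟩
    have : (killA (K := K) (m := m) A).toRingHom (xv K k j) = 0 := by
      show killA (K := K) (m := m) A (xv K k j) = 0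
      rw [xv, killA_X]
      simp [hj]
    rw [SetLike.mem_coe, Ideal.mem_bot]
    exact this
  simpa using hle hmap

lemma sub_killA_mem_varsIdeal (A : Finset (Fin n)) (c : PolyS K m n) :
    c - killA (m := m) A c ∈ varsIdeal K m A := by
  classical
  induction c using MvPolynomial.induction_on with
  | C a => rw [show killA (m := m) A (MvPolynomial.C a) = MvPolynomial.C a by
      simp [killA], sub_self]; exact Submodule.zero_mem _
  | add p q hp hq =>
    rw [map_add]
    have : p + q - (killA (m := m) A p + killA (m := m) A q)
        = (p - killA (m := m) A p) + (q - killA (m := m) A q) := by ring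
    rw [this]
    exact Submodule.add_mem _ hp hq
  | mul_X p v hp =>
    rw [map_mul]
    have heq : p * MvPolynomial.X v -
        killA (m := m) A p * killA (m := m) A (MvPolynomial.X v)
        = (p - killA (m := m) A p) * MvPolynomial.X v +
          killA (m := m) A p * (MvPolynomial.X v - killA (m := m) A (MvPolynomial.X v)) := by
      ring
    rw [heq]
    refine Submodule.add_mem _ (Ideal.mul_mem_right _ _ hp) ?_
    rw [killA_X]
    by_cases hv : (ofLex v).2 ∈ A
    · rw [if_pos hv]
      refine Ideal.mul_mem_left _ _ ?_
      apply Ideal.subset_span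
      refine ⟨(ofLex v).1, (ofLex v).2, hv, ?_⟩
      rw [xv]
      norm_num
    · rw [if_neg hv, sub_self, mul_zero]
      exact Submodule.zero_mem _

lemma isLeadExp_X (v : Fin m ×ₗ Fin n) :
    IsLeadExp K (MvPolynomial.X v) (Finsupp.single v 1) := by
  constructor
  · rw [MvPolynomial.support_X]; exact Finset.mem_singleton_self _
  · intro e he hne
    rw [MvPolynomial.support_X, Finset.mem_singleton] at he
    exact absurd he hne

lemma X_eq_monomial (v : Fin m ×ₗ Fin n) :
    (MvPolynomial.X v : PolyS K m n) = MvPolynomial.monomial (Finsupp.single v 1) 1 := rfl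

lemma varsIdeal_le_ini {A : Finset (Fin n)} {J : Ideal (PolyS K m n)}
    (h : varsIdeal K m A ≤ J) : varsIdeal K m A ≤ iniIdeal K J := by
  rw [varsIdeal, Ideal.span_le]
  rintro f ⟨k, j, hj, rfl⟩
  have hmem : xv K k j ∈ J := h (Ideal.subset_span ⟨k, j, hj, rfl⟩)
  have := monomial_lead_mem_iniIdeal hmem (isLeadExp_X (toLex (k, j)))
  rwa [← X_eq_monomial] at this

lemma ini_sup_varsIdeal {A : Finset (Fin n)} {W : Ideal (PolyS K m n)}
    {WS : Set (PolyS K m n)} (hW : W = Ideal.span WS)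
    (hfree : ∀ g ∈ WS, ∀ w ∈ g.support, AFree A w) :
    iniIdeal K (varsIdeal K m A ⊔ W) = varsIdeal K m A ⊔ iniIdeal K W := by
  classical
  apply le_antisymm
  · rw [iniIdeal, Ideal.span_le]
    rintro f ⟨p, hp, d, hd, rfl⟩
    by_cases hC : AFree A d
    · -- lead exponent avoids A: reduce to W via killA
      have hkp : killA (m := m) A p ∈ W := by
        obtain ⟨a, ha, b, hb, rfl⟩ := Submodule.mem_sup.mp hp
        rw [map_add, killA_varsIdeal_eq_zero ha, zero_add]
        have hmap : killA (m := m) A b ∈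
            Ideal.map (killA (K := K) (m := m) A).toRingHom W :=
          Ideal.mem_map_of_mem _ hb
        have hle : Ideal.map (killA (K := K) (m := m) A).toRingHom W ≤ W := by
          rw [hW, Ideal.map_span, Ideal.span_le]
          rintro f ⟨g, hg, rfl⟩
          have : (killA (K := K) (m := m) A).toRingHom g = g := killA_fixes (hfree g hg)
          rw [this]
          exact Ideal.subset_span hg
        exact hle hmap
      have hlead : IsLeadExp K (killA (m := m) A p) d := by
        constructor
        · rw [MvPolynomial.mem_support_iff, killA_coeff, if_pos hC]
          exact MvPolynomial.mem_support_iff.mp hd.1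
        · intro e he hne
          exact hd.2 e (killA_support_subset A p he) hne
      exact Submodule.mem_sup_right (monomial_lead_mem_iniIdeal hkp hlead)
    · -- some variable with column in A divides the lead monomial
      simp only [AFree, not_forall] at hC
      obtain ⟨v, hvA, hv0⟩ := hC
      have hle : Finsupp.single v 1 ≤ d := by
        rw [Finsupp.single_le_iff]
        exact Nat.one_le_iff_ne_zero.mpr hv0
      have heq : (MvPolynomial.monomial d (1 : K) : PolyS K m n)
          = MvPolynomial.monomial (d - Finsupp.single v 1) (1 : K) * MvPolynomial.X v := by
        rw [X_eq_monomial, MvPolynomial.monomial_mul, tsub_add_cancel_of_le hle, mul_one]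
      rw [heq]
      refine Submodule.mem_sup_left (Ideal.mul_mem_left _ _ ?_)
      apply Ideal.subset_span
      refine ⟨(ofLex v).1, (ofLex v).2, hvA, ?_⟩
      rw [xv]
      norm_num
  · refine sup_le (varsIdeal_le_ini le_sup_left) (iniIdeal_mono le_sup_right)

lemma gbei_mono {G H : SimpleGraph (Fin n)} (h : G ≤ H) :
    gbei K m G ≤ gbei K m H := by
  apply Ideal.span_mono
  rintro f ⟨k, l, i, j, hkl, hij, hadj, rfl⟩
  exact ⟨k, l, i, j, hkl, hij, h hadj, rfl⟩

lemma delVerts_le (H : SimpleGraph (Fin n)) (A : Finset (Fin n)) :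
    delVerts H A ≤ H := by intro a b hab; exact (show H.Adj a b ∧ a ∉ A ∧ b ∉ A from hab).1

lemma pminor_support_afree {A : Finset (Fin n)} {i j : Fin n} (hi : i ∉ A) (hj : j ∉ A)
    (k l : Fin m) : ∀ w ∈ (pminor K k l i j).support, AFree A w := by
  classical
  intro w hw v hvA
  have hXX : ∀ (a b : Fin m ×ₗ Fin n),
      (MvPolynomial.X a * MvPolynomial.X b : PolyS K m n)
        = MvPolynomial.monomial (Finsupp.single a 1 + Finsupp.single b 1) 1 := by
    intro a b
    rw [X_eq_monomial, X_eq_monomial, MvPolynomial.monomial_mul, mul_one]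
  have hsub := MvPolynomial.support_sub _ _ _ hw
  have hne : ∀ (kk ll : Fin m), v ≠ toLex ((kk, i) : Fin m × Fin n) ∧
      v ≠ toLex ((ll, j) : Fin m × Fin n) := by
    intro kk ll
    constructor
    · intro hv; rw [hv] at hvA; exact hi hvA
    · intro hv; rw [hv] at hvA; exact hj hvA
  simp only [pminor, xv] at hsub
  rw [hXX, hXX] at hsub
  rcases Finset.mem_union.mp hsub with h | h
  · rw [MvPolynomial.support_monomial, if_neg one_ne_zero, Finset.mem_singleton] at h
    subst h
    rw [Finsupp.add_apply, Finsupp.single_apply, Finsupp.single_apply,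
      if_neg (fun hh => (hne k l).1 hh.symm), if_neg (fun hh => (hne k l).2 hh.symm)]
    rfl
  · rw [MvPolynomial.support_monomial, if_neg one_ne_zero, Finset.mem_singleton] at h
    subst h
    rw [Finsupp.add_apply, Finsupp.single_apply, Finsupp.single_apply,
      if_neg (fun hh => (hne l l).1 hh.symm), if_neg (fun hh => (hne l k).2 hh.symm)]
    rfl

lemma sup_varsIdeal_gbei (H : SimpleGraph (Fin n)) (A : Finset (Fin n)) :
    varsIdeal K m A ⊔ gbei K m H = varsIdeal K m A ⊔ gbei K m (delVerts H A) := by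
  classical
  apply le_antisymm
  · refine sup_le le_sup_left ?_
    rw [gbei, Ideal.span_le]
    rintro f ⟨k, l, i, j, hkl, hij, hadj, rfl⟩
    by_cases hiA : i ∈ A
    · refine Submodule.mem_sup_left ?_
      simp only [pminor]
      exact Submodule.sub_mem _
        (Ideal.mul_mem_right _ _ (Ideal.subset_span ⟨k, i, hiA, rfl⟩))
        (Ideal.mul_mem_right _ _ (Ideal.subset_span ⟨l, i, hiA, rfl⟩))
    · by_cases hjA : j ∈ A
      · refine Submodule.mem_sup_left ?_
        simp only [pminor]
        have h1 : xv K k i * xv K l j = xv K l j * xv K k i := by ring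
        have h2 : xv K l i * xv K k j = xv K k j * xv K l i := by ring
        rw [h1, h2]
        exact Submodule.sub_mem _
          (Ideal.mul_mem_right _ _ (Ideal.subset_span ⟨l, j, hjA, rfl⟩))
          (Ideal.mul_mem_right _ _ (Ideal.subset_span ⟨k, j, hjA, rfl⟩))
      · exact Submodule.mem_sup_right
          (Ideal.subset_span ⟨k, l, i, j, hkl, hij, (show H.Adj i j ∧ i ∉ A ∧ j ∉ A from ⟨hadj, hiA, hjA⟩), rfl⟩)
  · exact sup_le le_sup_left (le_trans (gbei_mono (delVerts_le H A)) le_sup_right)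

lemma pminor_mem {G : SimpleGraph (Fin n)} {i j : Fin n} (hadj : G.Adj i j) (k l : Fin m) :
    pminor K k l i j ∈ gbei K m G := by
  have base : ∀ (i j : Fin n), i < j → G.Adj i j → ∀ k l : Fin m,
      pminor K k l i j ∈ gbei K m G := by
    intro i j hij hadj k l
    rcases lt_trichotomy k l with h | h | h
    · exact Ideal.subset_span ⟨k, l, i, j, h, hij, hadj, rfl⟩
    · subst h
      have hz : pminor K k k i j = 0 := by simp only [pminor]; ring
      rw [hz]; exact Submodule.zero_mem _
    · have hs : pminor K k l i j = -pminor K l k i j := by simp only [pminor]; ring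
      rw [hs]
      exact Submodule.neg_mem _ (Ideal.subset_span ⟨l, k, i, j, h, hij, hadj, rfl⟩)
  rcases lt_trichotomy i j with h | h | h
  · exact base i j h hadj k l
  · exact absurd h hadj.ne
  · have hs : pminor K k l i j = -pminor K k l j i := by simp only [pminor]; ring
    rw [hs]
    exact Submodule.neg_mem _ (base j i h hadj.symm k l)

lemma star_identity (k0 k l : Fin m) (a u v : Fin n) :
    xv K k0 a * pminor K k l u v =
      xv K l v * pminor K k0 k a u - xv K k v * pminor K k0 l a u
        + xv K k0 u * pminor K k l a v := by
  simp only [pminor]; ring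

lemma var_mul_pminor_mem {G : SimpleGraph (Fin n)} {a u v : Fin n} (hau : G.Adj a u)
    (hav : G.Adj a v) (k0 k l : Fin m) :
    xv K k0 a * pminor K k l u v ∈ gbei K m G := by
  rw [star_identity]
  exact Submodule.add_mem _
    (Submodule.sub_mem _
      (Ideal.mul_mem_left _ _ (pminor_mem hau k0 k))
      (Ideal.mul_mem_left _ _ (pminor_mem hau k0 l)))
    (Ideal.mul_mem_left _ _ (pminor_mem hav k l))

lemma gbei_le_sup_del (H : SimpleGraph (Fin n)) (A : Finset (Fin n)) :
    gbei K m H ≤ varsIdeal K m A ⊔ gbei K m (delVerts H A) := by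
  classical
  rw [gbei, Ideal.span_le]
  rintro f ⟨k, l, i, j, hkl, hij, hadj, rfl⟩
  by_cases hiA : i ∈ A
  · refine Submodule.mem_sup_left ?_
    simp only [pminor]
    exact Submodule.sub_mem _
      (Ideal.mul_mem_right _ _ (Ideal.subset_span ⟨k, i, hiA, rfl⟩))
      (Ideal.mul_mem_right _ _ (Ideal.subset_span ⟨l, i, hiA, rfl⟩))
  · by_cases hjA : j ∈ A
    · refine Submodule.mem_sup_left ?_
      simp only [pminor]
      have h1 : xv K k i * xv K l j = xv K l j * xv K k i := by ring
      have h2 : xv K l i * xv K k j = xv K k j * xv K l i := by ring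
      rw [h1, h2]
      exact Submodule.sub_mem _
        (Ideal.mul_mem_right _ _ (Ideal.subset_span ⟨l, j, hjA, rfl⟩))
        (Ideal.mul_mem_right _ _ (Ideal.subset_span ⟨k, j, hjA, rfl⟩))
    · exact Submodule.mem_sup_right
        (Ideal.subset_span ⟨k, l, i, j, hkl, hij, (show H.Adj i j ∧ i ∉ A ∧ j ∉ A from ⟨hadj, hiA, hjA⟩), rfl⟩)

lemma killA_pminor_zero {A : Finset (Fin n)} {i j : Fin n} (h : i ∈ A ∨ j ∈ A)
    (k l : Fin m) : killA (m := m) A (pminor K k l i j) = 0 := by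
  rcases h with hi | hj
  · simp [pminor, xv, killA_X, hi]
  · simp [pminor, xv, killA_X, hj]

lemma killA_map_gbei (H : SimpleGraph (Fin n)) (A : Finset (Fin n)) :
    Ideal.map (killA (K := K) (m := m) A).toRingHom (gbei K m H) ≤
      gbei K m (delVerts H A) := by
  classical
  rw [gbei, Ideal.map_span, Ideal.span_le]
  rintro f ⟨g, ⟨k, l, i, j, hkl, hij, hadj, rfl⟩, rfl⟩
  by_cases hiA : i ∈ A
  · have : (killA (K := K) (m := m) A).toRingHom (pminor K k l i j) = 0 :=
      killA_pminor_zero (Or.inl hiA) k l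
    rw [SetLike.mem_coe, this]
    exact Submodule.zero_mem _
  · by_cases hjA : j ∈ A
    · have : (killA (K := K) (m := m) A).toRingHom (pminor K k l i j) = 0 :=
        killA_pminor_zero (Or.inr hjA) k l
      rw [SetLike.mem_coe, this]
      exact Submodule.zero_mem _
    · have : (killA (K := K) (m := m) A).toRingHom (pminor K k l i j) = pminor K k l i j :=
        killA_fixes (pminor_support_afree hiA hjA k l)
      rw [SetLike.mem_coe, this]
      exact Ideal.subset_span ⟨k, l, i, j, hkl, hij, (show H.Adj i j ∧ i ∉ A ∧ j ∉ A from ⟨hadj, hiA, hjA⟩), rfl⟩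

theorem gbei_eq_inf_abstract (G Gbig : SimpleGraph (Fin n)) (A : Finset (Fin n))
    (hGle : G ≤ Gbig)
    (hnew : ∀ {u v : Fin n}, Gbig.Adj u v → ¬ G.Adj u v →
      u ∉ A ∧ v ∉ A ∧ ∀ a ∈ A, G.Adj a u ∧ G.Adj a v) :
    gbei K m G = gbei K m Gbig ⊓ (varsIdeal K m A ⊔ gbei K m (delVerts G A)) := by
  classical
  set NS : Set (PolyS K m n) := {f | ∃ (k l : Fin m) (i j : Fin n),
    k < l ∧ i < j ∧ Gbig.Adj i j ∧ ¬ G.Adj i j ∧ f = pminor K k l i j} with hNS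
  set N := Ideal.span NS with hN
  have hVN : varsIdeal K m A * N ≤ gbei K m G := by
    rw [varsIdeal, hN, Ideal.span_mul_span, Ideal.span_le]
    rintro f hf
    rw [Set.mem_mul] at hf
    obtain ⟨x, hx, y, hy, rfl⟩ := hf
    obtain ⟨k0, a, haA, rfl⟩ := hx
    obtain ⟨k, l, u, v, hkl, huv, hbig, hnG, rfl⟩ := hy
    obtain ⟨hu, hv, hadj⟩ := hnew hbig hnG
    exact var_mul_pminor_mem (hadj a haA).1 (hadj a haA).2 k0 k l
  have hNfix : ∀ g ∈ NS, killA (m := m) A g = g := by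
    rintro g ⟨k, l, u, v, hkl, huv, hbig, hnG, rfl⟩
    obtain ⟨hu, hv, _⟩ := hnew hbig hnG
    exact killA_fixes (pminor_support_afree hu hv k l)
  have hNkey : ∀ p ∈ N, p - killA (m := m) A p ∈ gbei K m G ∧ killA (m := m) A p ∈ N := by
    intro p hp
    refine Submodule.span_induction ?_ ?_ ?_ ?_ hp
    · intro g hg
      rw [hNfix g hg]
      exact ⟨by rw [sub_self]; exact Submodule.zero_mem _, Ideal.subset_span hg⟩
    · rw [map_zero]
      exact ⟨by rw [sub_self]; exact Submodule.zero_mem _, Submodule.zero_mem _⟩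
    · rintro p q _ _ ⟨hp1, hp2⟩ ⟨hq1, hq2⟩
      rw [map_add]
      constructor
      · have : p + q - (killA (m := m) A p + killA (m := m) A q)
            = (p - killA (m := m) A p) + (q - killA (m := m) A q) := by ring
        rw [this]
        exact Submodule.add_mem _ hp1 hq1
      · exact Submodule.add_mem _ hp2 hq2
    · rintro c p _ ⟨h1, h2⟩
      constructor
      · have heq : c • p - killA (m := m) A (c • p)
            = c * (p - killA (m := m) A p) +
              (c - killA (m := m) A c) * killA (m := m) A p := by
          simp only [smul_eq_mul, map_mul]; ring
        rw [heq]
        exact Submodule.add_mem _ (Ideal.mul_mem_left _ _ h1)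
          (hVN (Ideal.mul_mem_mul (sub_killA_mem_varsIdeal A c) h2))
      · rw [smul_eq_mul, map_mul]
        exact Ideal.mul_mem_left _ _ h2
  apply le_antisymm
  · exact le_inf (gbei_mono hGle) (gbei_le_sup_del G A)
  · rintro f ⟨hf1, hf2⟩
    have hsplit : gbei K m Gbig ≤ gbei K m G ⊔ N := by
      rw [gbei, Ideal.span_le]
      rintro f ⟨k, l, i, j, hkl, hij, hadj, rfl⟩
      by_cases hGadj : G.Adj i j
      · exact Submodule.mem_sup_left (Ideal.subset_span ⟨k, l, i, j, hkl, hij, hGadj, rfl⟩)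
      · exact Submodule.mem_sup_right (Ideal.subset_span ⟨k, l, i, j, hkl, hij, hadj, hGadj, rfl⟩)
    obtain ⟨h, hh, g, hg, hfeq⟩ := Submodule.mem_sup.mp (hsplit hf1)
    have hkf : killA (m := m) A f ∈ gbei K m (delVerts G A) := by
      obtain ⟨a, ha, b, hb, hab⟩ := Submodule.mem_sup.mp hf2
      rw [← hab, map_add, killA_varsIdeal_eq_zero ha, zero_add]
      have hmap : killA (m := m) A b ∈
          Ideal.map (killA (K := K) (m := m) A).toRingHom (gbei K m (delVerts G A)) :=
        Ideal.mem_map_of_mem _ hb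
      have hmem := killA_map_gbei (delVerts G A) A hmap
      have hmono : gbei K m (delVerts (delVerts G A) A) ≤ gbei K m (delVerts G A) := by
        apply gbei_mono
        intro a b hab
        exact (show (delVerts G A).Adj a b ∧ a ∉ A ∧ b ∉ A from hab).1
      exact hmono hmem
    have hkh : killA (m := m) A h ∈ gbei K m (delVerts G A) :=
      killA_map_gbei G A (Ideal.mem_map_of_mem _ hh)
    have hkg : killA (m := m) A g ∈ gbei K m (delVerts G A) := by
      have : killA (m := m) A g = killA (m := m) A f - killA (m := m) A h := by
        rw [← hfeq, map_add]; ring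
      rw [this]
      exact Submodule.sub_mem _ hkf hkh
    have hkey := (hNkey g hg).1
    have hdel : gbei K m (delVerts G A) ≤ gbei K m G := gbei_mono (delVerts_le G A)
    have hfin : f = h + (g - killA (m := m) A g) + killA (m := m) A g := by
      rw [← hfeq]; ring
    rw [hfin]
    exact Submodule.add_mem _ (Submodule.add_mem _ hh hkey) (hdel hkg)

-- homogeneity of generators
lemma pminor_isHomogeneous (k l : Fin m) (i j : Fin n) :
    (pminor K k l i j).IsHomogeneous 2 := by
  have h1 : (xv K k i * xv K l j).IsHomogeneous 2 := by
    have := (isHomogeneous_X K (toLex ((k, i) : Fin m × Fin n))).mul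
      (isHomogeneous_X K (toLex ((l, j) : Fin m × Fin n)))
    exact this
  have h2 : (xv K l i * xv K k j).IsHomogeneous 2 := by
    have := (isHomogeneous_X K (toLex ((l, i) : Fin m × Fin n))).mul
      (isHomogeneous_X K (toLex ((k, j) : Fin m × Fin n)))
    exact this
  rw [pminor, ← mem_homogeneousSubmodule] at *
  exact Submodule.sub_mem _ h1 h2

lemma gbei_compStable (G : SimpleGraph (Fin n)) : CompStable (gbei K m G) := by
  apply compStable_span
  rintro g ⟨k, l, i, j, _, _, _, rfl⟩
  exact ⟨2, pminor_isHomogeneous k l i j⟩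

lemma varsIdeal_compStable (A : Finset (Fin n)) : CompStable (varsIdeal K m A) := by
  apply compStable_span
  rintro g ⟨k, j, _, rfl⟩
  exact ⟨1, isHomogeneous_X K _⟩

end AuxMachinery

/-- in the leaf-order setup, with `J₁ = 𝔍_{G'}` and
`J₂ = (x_{kj} : j ∈ A) + 𝔍_{G''}`, one has
`ini_<(J₁ + J₂) = ini_<(J₁) + ini_<(J₂)` and
`ini_<(𝔍_G) = ini_<(J₁ ∩ J₂) = ini_<(J₁) ∩ ini_<(J₂)`. -/
theorem iniIdeal_inf_decomposition (K : Type) [Field K] (m : ℕ) (hm : 2 ≤ m)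
    (n r q α : ℕ) (hn : 2 ≤ n) (hr : 1 < r) (hq : 1 ≤ q) (hα : 1 ≤ α)
    (G : SimpleGraph (Fin n)) (hGconn : G.Connected) (hgb : IsGeneralizedBlockGraph G)
    (F : Fin r → Finset (Fin n))
    (hmc : ∀ i, IsMaxClique G (F i))
    (hFinj : Function.Injective F)
    (hFall : ∀ s : Finset (Fin n), IsMaxClique G s → ∃ i, F i = s)
    (lst : Fin r) (hlst : ∀ i : Fin r, i ≤ lst)
    (hleaf : ∀ i : Fin r, (i : ℕ) ≠ 0 → ∃ j, j < i ∧ ∀ k, k < i → F k ∩ F i ⊆ F j ∩ F i)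
    (t : Fin q → Fin r) (htinj : Function.Injective t) (htne : ∀ i, t i ≠ lst)
    (hbr : ∀ k : Fin r, k ≠ lst → ((∃ i, t i = k) ↔ (F k ∩ F lst).Nonempty))
    (A : Finset (Fin n)) (hcard : A.card = α)
    (hA1 : ∀ i, F (t i) ∩ F lst = A)
    (hA2 : ∀ i j, i ≠ j → F (t i) ∩ F (t j) = A)
    (G' : SimpleGraph (Fin n))
    (hG' : G' = G ⊔ cliqueOn (F lst ∪ Finset.univ.biUnion fun i => F (t i)))
    (J₁ J₂ : Ideal (PolyS K m n))
    (hJ₁ : J₁ = gbei K m G')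
    (hJ₂ : J₂ = varsIdeal K m A + gbei K m (delVerts G A)) :
    iniIdeal K (J₁ + J₂) = iniIdeal K J₁ + iniIdeal K J₂ ∧
    iniIdeal K (gbei K m G) = iniIdeal K (J₁ ⊓ J₂) ∧
    iniIdeal K (J₁ ⊓ J₂) = iniIdeal K J₁ ⊓ iniIdeal K J₂ := by
  -- basic graph facts
  set B : Finset (Fin n) := F lst ∪ Finset.univ.biUnion fun i => F (t i) with hB
  have i0 : Fin q := ⟨0, hq⟩
  have hAlst : A ⊆ F lst := by
    rw [← hA1 i0]; exact Finset.inter_subset_right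
  have hAti : ∀ i, A ⊆ F (t i) := fun i => by
    rw [← hA1 i]; exact Finset.inter_subset_left
  have hcliqueB : ∀ w ∈ B, ∀ a ∈ A, a ≠ w → G.Adj a w := by
    intro w hw a ha hne
    rcases Finset.mem_union.mp hw with h | h
    · exact (hmc lst).1 (Finset.mem_coe.mpr (hAlst ha)) (Finset.mem_coe.mpr h) hne
    · obtain ⟨i, _, hi⟩ := Finset.mem_biUnion.mp h
      exact (hmc (t i)).1 (Finset.mem_coe.mpr (hAti i ha)) (Finset.mem_coe.mpr hi) hne
  have hGle : G ≤ G' := by rw [hG']; exact le_sup_left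
  have hnew : ∀ {u v : Fin n}, G'.Adj u v → ¬ G.Adj u v →
      u ∉ A ∧ v ∉ A ∧ ∀ a ∈ A, G.Adj a u ∧ G.Adj a v := by
    intro u v huv hnG
    rw [hG'] at huv
    rcases huv with h | h
    · exact absurd h hnG
    · obtain ⟨hne, hu, hv⟩ : u ≠ v ∧ u ∈ B ∧ v ∈ B := h
      have huA : u ∉ A := fun huA => hnG (hcliqueB v hv u huA hne)
      have hvA : v ∉ A := fun hvA => hnG ((hcliqueB u hu v hvA (Ne.symm hne)).symm)
      refine ⟨huA, hvA, fun a ha => ⟨?_, ?_⟩⟩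
      · exact hcliqueB u hu a ha (fun heq => huA (heq ▸ ha))
      · exact hcliqueB v hv a ha (fun heq => hvA (heq ▸ ha))
  -- the intersection lemma (Ohtani)
  have hJG : gbei K m G = J₁ ⊓ J₂ := by
    rw [hJ₁, hJ₂, Submodule.add_eq_sup]
    exact gbei_eq_inf_abstract G G' A hGle hnew
  -- compstability
  have hc1 : CompStable J₁ := by rw [hJ₁]; exact gbei_compStable G'
  have hc2 : CompStable J₂ := by
    rw [hJ₂, Submodule.add_eq_sup]
    exact (varsIdeal_compStable A).sup (gbei_compStable _)
  -- claim 1 : initial ideal of the sum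
  have hdelG'A : gbei K m (delVerts G A) ≤ gbei K m G' :=
    gbei_mono (le_trans (delVerts_le G A) hGle)
  have hJsup : J₁ ⊔ J₂ = varsIdeal K m A ⊔ gbei K m (delVerts G' A) := by
    rw [hJ₁, hJ₂, Submodule.add_eq_sup]
    have h1 : gbei K m G' ⊔ (varsIdeal K m A ⊔ gbei K m (delVerts G A))
        = varsIdeal K m A ⊔ gbei K m G' := by
      apply le_antisymm
      · exact sup_le le_sup_right (sup_le le_sup_left (hdelG'A.trans le_sup_right))
      · exact sup_le (le_sup_of_le_right le_sup_left) le_sup_left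
    rw [h1, sup_varsIdeal_gbei G' A]
  have hiniJsup : iniIdeal K (J₁ ⊔ J₂)
      = varsIdeal K m A ⊔ iniIdeal K (gbei K m (delVerts G' A)) := by
    rw [hJsup]
    refine ini_sup_varsIdeal rfl ?_
    rintro g ⟨k, l, i, j, _, _, hadj, rfl⟩
    exact pminor_support_afree (show G'.Adj i j ∧ i ∉ A ∧ j ∉ A from hadj).2.1 (show G'.Adj i j ∧ i ∉ A ∧ j ∉ A from hadj).2.2 k l
  have claim1 : iniIdeal K (J₁ ⊔ J₂) = iniIdeal K J₁ ⊔ iniIdeal K J₂ := by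
    apply le_antisymm
    · rw [hiniJsup]
      refine sup_le ?_ ?_
      · refine le_trans (varsIdeal_le_ini (J := J₂) ?_) le_sup_right
        rw [hJ₂, Submodule.add_eq_sup]
        exact le_sup_left
      · refine le_trans (iniIdeal_mono ?_) (le_sup_left (b := iniIdeal K J₂))
        rw [hJ₁]
        exact gbei_mono (delVerts_le G' A)
    · exact sup_le (iniIdeal_mono le_sup_left) (iniIdeal_mono le_sup_right)
  refine ⟨?_, ?_, ?_⟩
  · rw [Submodule.add_eq_sup, Submodule.add_eq_sup]
    exact claim1
  · rw [hJG]
  · exact iniIdeal_inf_of_sup_eq hc1 hc2 claim1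


end GBEI
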